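/- Let 1 ≤ m ≤ M ≤ N, let Ω_N ⊆ ℂ^N and Ω_M ⊆ ℂ^M be open sets, and let f : Ω_N → Ω_M be given by f(z) = cAz + w_0, where c ∈ ℝ, w_0 ∈ ℂ^M and A is an M×N homothety-projection matrix. Then for every C² function φ : Ω_M → ℝ whose complex Hessian H_φ(w) has its eigenvalue vector in Λ_{m,M} for every w ∈ Ω_M, the complex Hessian H_{φ∘f}(z) has its eigenvalue vector in Λ_{m,N} for every z ∈ Ω_N. (Theorem C, implication (2a)⇒(1), with smooth test functions.) -/

import Mathlib

/-- The complex Hessian matrix of `φ : ℂ^m → ℝ` at `w`, with entries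
`(∂²φ/∂z_j∂z̄_k)(w)` expressed through the second real Fréchet derivative. -/
noncomputable def complexHessian {m : ℕ} (φ : (Fin m → ℂ) → ℝ) (w : Fin m → ℂ) :
    Matrix (Fin m) (Fin m) ℂ :=
  Matrix.of fun j k =>
    (((1 / 4 : ℝ) * (fderiv ℝ (fderiv ℝ φ) w (Pi.single j 1) (Pi.single k 1)
        + fderiv ℝ (fderiv ℝ φ) w (Pi.single j Complex.I) (Pi.single k Complex.I)) : ℝ) : ℂ)
    + Complex.I * (((1 / 4 : ℝ) *
        (fderiv ℝ (fderiv ℝ φ) w (Pi.single j 1) (Pi.single k Complex.I)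
        - fderiv ℝ (fderiv ℝ φ) w (Pi.single j Complex.I) (Pi.single k 1)) : ℝ) : ℂ)

/-- The `l`-th elementary symmetric polynomial of `x ∈ ℝ^N`. -/
def esymm {N : ℕ} (l : ℕ) (x : Fin N → ℝ) : ℝ :=
  ∑ s ∈ Finset.powersetCard l (Finset.univ : Finset (Fin N)), ∏ j ∈ s, x j

/-- The cone `Λ_{k,N} = {x ∈ ℝ^N : σ_l(x) ≥ 0, l = 1,…,k}`. -/
def Lambda (k N : ℕ) : Set (Fin N → ℝ) :=
  {x | ∀ l, 1 ≤ l → l ≤ k → 0 ≤ esymm l x}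

/-- An `M × N` complex matrix is a homothety-projection matrix if its rows are pairwise
orthogonal and all have the same Euclidean norm. -/
def IsHomothetyProjection {M N : ℕ} (A : Matrix (Fin M) (Fin N) ℂ) : Prop :=
  (∀ j k, j ≠ k → ∑ i, A j i * (starRingEnd ℂ) (A k i) = 0) ∧
  ∀ j k, ∑ i, ‖A j i‖ ^ 2 = ∑ i, ‖A k i‖ ^ 2

/-! ### Auxiliary results: determinants and eigenvalues -/

lemma det_smul_one_sub_smul_hermitian {n : ℕ} {K : Matrix (Fin n) (Fin n) ℂ}
    (hK : K.IsHermitian) (s x : ℂ) :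
    (x • (1 : Matrix (Fin n) (Fin n) ℂ) - s • K).det
      = ∏ i, (x - s * (hK.eigenvalues i : ℂ)) := by
  set U : Matrix (Fin n) (Fin n) ℂ := (hK.eigenvectorUnitary : Matrix (Fin n) (Fin n) ℂ)
  have hU : U * star U = 1 := (Matrix.mem_unitaryGroup_iff).mp hK.eigenvectorUnitary.2
  have key : x • (1 : Matrix (Fin n) (Fin n) ℂ) - s • K
      = U * (Matrix.diagonal (fun i => x - s * (hK.eigenvalues i : ℂ))) * star U := by
    have hKe : K = U * Matrix.diagonal (RCLike.ofReal ∘ hK.eigenvalues) * star U :=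
      hK.spectral_theorem
    have hd : Matrix.diagonal (fun i => x - s * (hK.eigenvalues i : ℂ))
        = x • (1 : Matrix (Fin n) (Fin n) ℂ)
          - s • Matrix.diagonal (RCLike.ofReal ∘ hK.eigenvalues) := by
      rw [Matrix.smul_one_eq_diagonal, ← Matrix.diagonal_smul, Matrix.diagonal_sub]
      rfl
    rw [hd, Matrix.mul_sub, Matrix.sub_mul]
    rw [Matrix.mul_smul, Matrix.smul_mul, Matrix.mul_smul, Matrix.smul_mul]
    rw [Matrix.mul_one, hU, ← hKe]
  rw [key, Matrix.det_mul_right_comm, hU, Matrix.one_mul, Matrix.det_diagonal]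

open Polynomial Matrix in
lemma eig_multiset_eq {M N : ℕ} (hMN : M ≤ N) (t : ℝ)
    {H : Matrix (Fin M) (Fin M) ℂ} (hH : H.IsHermitian)
    {B : Matrix (Fin N) (Fin M) ℂ} (hB : Bᴴ * B = (t : ℂ) • 1)
    (hG : (B * H * Bᴴ).IsHermitian) :
    Multiset.map hG.eigenvalues Finset.univ.val
      = Multiset.replicate (N - M) 0
        + Multiset.map (fun j => t * hH.eigenvalues j) Finset.univ.val := by
  set p : ℂ[X] := ∏ i : Fin N, (X - C ((hG.eigenvalues i : ℝ) : ℂ)) with hp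
  set q : ℂ[X] := X ^ (N - M) * ∏ j : Fin M, (X - C (((t * hH.eigenvalues j : ℝ)) : ℂ)) with hq
  have hroot : ∀ x : ℂ, x ≠ 0 → p.eval x = q.eval x := by
    intro x hx
    have e1 : x • (1 : Matrix (Fin N) (Fin N) ℂ) - B * H * Bᴴ
        = x • (1 + B * ((-x⁻¹) • (H * Bᴴ))) := by
      rw [smul_add, Matrix.mul_smul, smul_smul, mul_neg, mul_inv_cancel₀ hx, neg_smul, one_smul,
        ← Matrix.mul_assoc, sub_eq_add_neg]
    have e2 : x • (1 : Matrix (Fin M) (Fin M) ℂ) - (t : ℂ) • H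
        = x • (1 + (-x⁻¹ * (t : ℂ)) • H) := by
      rw [smul_add, smul_smul, ← mul_assoc, mul_neg, mul_inv_cancel₀ hx, neg_one_mul, neg_smul,
        sub_eq_add_neg]
    have e3 : ((-x⁻¹) • (H * Bᴴ)) * B = (-x⁻¹ * (t : ℂ)) • H := by
      rw [Matrix.smul_mul, Matrix.mul_assoc, hB, mul_smul_comm, Matrix.mul_one, smul_smul]
    have hevp : p.eval x = (x • (1 : Matrix (Fin N) (Fin N) ℂ) - B * H * Bᴴ).det := by
      have h := det_smul_one_sub_smul_hermitian hG 1 x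
      rw [one_smul] at h
      simp [hp, h, eval_prod]
    have hevq : q.eval x
        = x ^ (N - M) * (x • (1 : Matrix (Fin M) (Fin M) ℂ) - (t : ℂ) • H).det := by
      have h := det_smul_one_sub_smul_hermitian hH (t : ℂ) x
      rw [h]
      simp [hq, eval_prod]
    rw [hevp, hevq, e1, e2, Matrix.det_smul, Matrix.det_smul, Fintype.card_fin, Fintype.card_fin,
      Matrix.det_one_add_mul_comm, e3, ← mul_assoc, ← pow_add, Nat.sub_add_cancel hMN]
  have hpq : p = q := by
    have hr : (p - q) = 0 := by
      apply Polynomial.eq_zero_of_infinite_isRoot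
      apply Set.Infinite.mono (s := {x : ℂ | x ≠ 0})
      · intro x hx
        simp only [Set.mem_setOf_eq, IsRoot.def, eval_sub, sub_eq_zero]
        exact hroot x hx
      · exact Set.Finite.infinite_compl (Set.finite_singleton 0)
    exact sub_eq_zero.mp hr
  have hprootsaux : ∀ (n : ℕ) (g : Fin n → ℝ),
      (∏ i : Fin n, (X - C ((g i : ℝ) : ℂ))).roots
        = Multiset.map (fun i => ((g i : ℝ) : ℂ)) Finset.univ.val := by
    intro n g
    rw [Finset.prod_eq_multiset_prod,
      show (fun i : Fin n => X - C ((g i : ℝ) : ℂ))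
          = (fun a : ℂ => X - C a) ∘ (fun i : Fin n => ((g i : ℝ) : ℂ)) from rfl,
      ← Multiset.map_map]
    exact roots_multiset_prod_X_sub_C _
  have hqne : (X ^ (N - M) * ∏ j : Fin M, (X - C (((t * hH.eigenvalues j : ℝ)) : ℂ))) ≠ 0 := by
    apply mul_ne_zero (pow_ne_zero _ X_ne_zero)
    exact (monic_prod_of_monic _ _ fun _ _ => monic_X_sub_C _).ne_zero
  have hroots : p.roots = q.roots := by rw [hpq]
  rw [hp, hprootsaux] at hroots
  rw [hq, Polynomial.roots_mul hqne, roots_pow, roots_X, Multiset.nsmul_singleton,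
    hprootsaux] at hroots
  apply Multiset.map_injective (Complex.ofReal_injective)
  rw [Multiset.map_map, Multiset.map_add, Multiset.map_replicate, Multiset.map_map]
  simpa using hroots

/-! ### Auxiliary results: elementary symmetric functions of multisets -/

lemma esymm_cons_zero {l : ℕ} (hl : 1 ≤ l) (s : Multiset ℝ) :
    ((0 : ℝ) ::ₘ s).esymm l = s.esymm l := by
  obtain ⟨n, rfl⟩ : ∃ n, l = n + 1 := ⟨l - 1, (Nat.succ_pred_eq_of_pos hl).symm⟩
  simp [Multiset.esymm, Multiset.powersetCard_cons, Multiset.map_map, Function.comp_def]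

lemma esymm_replicate_zero_add {l : ℕ} (hl : 1 ≤ l) (k : ℕ) (s : Multiset ℝ) :
    (Multiset.replicate k (0 : ℝ) + s).esymm l = s.esymm l := by
  induction k with
  | zero => simp
  | succ k ih =>
    rw [Multiset.replicate_succ, Multiset.cons_add, esymm_cons_zero hl, ih]

lemma esymm_map_mul (t : ℝ) (l : ℕ) (s : Multiset ℝ) :
    (s.map (fun a => t * a)).esymm l = t ^ l * s.esymm l := by
  rw [Multiset.esymm, Multiset.esymm, Multiset.powersetCard_map, Multiset.map_map,
    ← Multiset.sum_map_mul_left]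
  apply congrArg Multiset.sum
  apply Multiset.map_congr rfl
  intro u hu
  have hcard : Multiset.card u = l := (Multiset.mem_powersetCard.mp hu).2
  simp only [Function.comp_apply]
  calc (Multiset.map (fun a => t * a) u).prod
      = (Multiset.map (fun _ => t) u).prod * (Multiset.map id u).prod := by
        rw [← Multiset.prod_map_mul]; rfl
    _ = t ^ l * u.prod := by
        rw [Multiset.map_const', Multiset.prod_replicate, hcard, Multiset.map_id]

/-! ### Auxiliary results: the sesquilinear form of an `ℝ`-bilinear form -/

/-- The sesquilinear form associated with an `ℝ`-bilinear form on `ℂ^M`. -/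
noncomputable def hq {M : ℕ} (D : (Fin M → ℂ) →L[ℝ] ((Fin M → ℂ) →L[ℝ] ℝ))
    (u v : Fin M → ℂ) : ℂ :=
  (((1 / 4 : ℝ) * (D u v + D (Complex.I • u) (Complex.I • v)) : ℝ) : ℂ)
    + Complex.I * (((1 / 4 : ℝ) * (D u (Complex.I • v) - D (Complex.I • u) v) : ℝ) : ℂ)

section hqLemmas

variable {M : ℕ} (D : (Fin M → ℂ) →L[ℝ] ((Fin M → ℂ) →L[ℝ] ℝ))

lemma hq_add_left (u u' v : Fin M → ℂ) : hq D (u + u') v = hq D u v + hq D u' v := by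
  simp only [hq, smul_add, map_add, ContinuousLinearMap.add_apply]
  push_cast
  ring

lemma hq_add_right (u v v' : Fin M → ℂ) : hq D u (v + v') = hq D u v + hq D u v' := by
  simp only [hq, smul_add, map_add, ContinuousLinearMap.add_apply]
  push_cast
  ring

lemma hq_zero_left (v : Fin M → ℂ) : hq D 0 v = 0 := by
  simp [hq]

lemma hq_zero_right (u : Fin M → ℂ) : hq D u 0 = 0 := by
  simp [hq]

lemma hq_real_smul_left (x : ℝ) (u v : Fin M → ℂ) : hq D (x • u) v = x * hq D u v := by
  simp only [hq, smul_comm Complex.I (x : ℝ), map_smul, ContinuousLinearMap.smul_apply,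
    smul_eq_mul]
  push_cast
  ring

lemma hq_real_smul_right (x : ℝ) (u v : Fin M → ℂ) : hq D u (x • v) = x * hq D u v := by
  simp only [hq, smul_comm Complex.I (x : ℝ), map_smul, ContinuousLinearMap.smul_apply,
    smul_eq_mul]
  push_cast
  ring

lemma hq_I_smul_left (u v : Fin M → ℂ) :
    hq D (Complex.I • u) v = Complex.I * hq D u v := by
  have hI : Complex.I • Complex.I • u = -u := by
    rw [smul_smul, Complex.I_mul_I, neg_one_smul]
  have hIv : Complex.I • Complex.I • v = -v := by
    rw [smul_smul, Complex.I_mul_I, neg_one_smul]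
  simp only [hq, hI, hIv, map_neg, ContinuousLinearMap.neg_apply]
  simp only [Complex.ext_iff, Complex.add_re, Complex.add_im, Complex.mul_re, Complex.mul_im,
    Complex.I_re, Complex.I_im, Complex.ofReal_re, Complex.ofReal_im]
  constructor <;> ring

lemma hq_I_smul_right (u v : Fin M → ℂ) :
    hq D u (Complex.I • v) = -Complex.I * hq D u v := by
  have hIv : Complex.I • Complex.I • v = -v := by
    rw [smul_smul, Complex.I_mul_I, neg_one_smul]
  simp only [hq, hIv, map_neg, ContinuousLinearMap.neg_apply]
  simp only [Complex.ext_iff, Complex.add_re, Complex.add_im, Complex.mul_re, Complex.mul_im,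
    Complex.I_re, Complex.I_im, Complex.ofReal_re, Complex.ofReal_im, Complex.neg_re,
    Complex.neg_im]
  constructor <;> ring

lemma complex_smul_decomp (a : ℂ) (u : Fin M → ℂ) :
    a • u = (a.re : ℝ) • u + (a.im : ℝ) • (Complex.I • u) := by
  funext p
  simp only [Pi.add_apply, Pi.smul_apply, Complex.real_smul, smul_eq_mul]
  conv_lhs => rw [← Complex.re_add_im a]
  ring

lemma hq_smul_left (a : ℂ) (u v : Fin M → ℂ) : hq D (a • u) v = a * hq D u v := by
  rw [complex_smul_decomp, hq_add_left, hq_real_smul_left, hq_real_smul_left, hq_I_smul_left]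
  conv_rhs => rw [← Complex.re_add_im a]
  ring

lemma hq_smul_right (a : ℂ) (u v : Fin M → ℂ) :
    hq D u (a • v) = (starRingEnd ℂ) a * hq D u v := by
  rw [complex_smul_decomp, hq_add_right, hq_real_smul_right, hq_real_smul_right, hq_I_smul_right]
  conv_rhs => rw [← Complex.re_add_im a]
  rw [map_add, map_mul, Complex.conj_ofReal, Complex.conj_ofReal, Complex.conj_I]
  ring

lemma hq_sum_left {ι : Type*} (s : Finset ι) (w : ι → (Fin M → ℂ)) (v : Fin M → ℂ) :
    hq D (∑ i ∈ s, w i) v = ∑ i ∈ s, hq D (w i) v := by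
  classical
  induction s using Finset.induction_on with
  | empty => simp [hq_zero_left]
  | insert a s' hne ih =>
                     rw [Finset.sum_insert hne, hq_add_left, ih, Finset.sum_insert hne]

lemma hq_sum_right {ι : Type*} (s : Finset ι) (w : ι → (Fin M → ℂ)) (u : Fin M → ℂ) :
    hq D u (∑ i ∈ s, w i) = ∑ i ∈ s, hq D u (w i) := by
  classical
  induction s using Finset.induction_on with
  | empty => simp [hq_zero_right]
  | insert a s' hne ih =>
                     rw [Finset.sum_insert hne, hq_add_right, ih, Finset.sum_insert hne]

end hqLemmas

lemma I_smul_single {M : ℕ} (j : Fin M) :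
    Complex.I • (Pi.single j 1 : Fin M → ℂ) = Pi.single j Complex.I := by
  funext p
  by_cases h : p = j <;> simp [Pi.single_apply, h]

open Matrix in
lemma complexHessian_eq_hq {M : ℕ} (φ : (Fin M → ℂ) → ℝ) (w : Fin M → ℂ) (p q : Fin M) :
    complexHessian φ w p q = hq (fderiv ℝ (fderiv ℝ φ) w) (Pi.single p 1) (Pi.single q 1) := by
  simp only [complexHessian, hq, Matrix.of_apply, ← I_smul_single]

open Matrix

set_option maxHeartbeats 1000000

/-- Theorem C, implication (2a) ⇒ (1), with C² test functions: if `f(z) = cAz + w₀`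
with `A` a homothety-projection matrix, then `f` is an `(m,m)`-subharmonic morphism. -/
theorem theoremC_2a_implies_1 (N M : ℕ) (m : ℕ)
    (hm1 : 1 ≤ m) (hmM : m ≤ M) (hMN : M ≤ N)
    (ΩN : Set (Fin N → ℂ)) (ΩM : Set (Fin M → ℂ))
    (hΩN : IsOpen ΩN) (hΩM : IsOpen ΩM)
    (f : (Fin N → ℂ) → (Fin M → ℂ)) (hmaps : Set.MapsTo f ΩN ΩM)
    (c : ℝ) (w₀ : Fin M → ℂ) (A : Matrix (Fin M) (Fin N) ℂ)
    (hA : IsHomothetyProjection A)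
    (hf : ∀ z, f z = (c : ℂ) • A.mulVec z + w₀) :
    ∀ φ : (Fin M → ℂ) → ℝ, ContDiffOn ℝ 2 φ ΩM →
      (∀ w ∈ ΩM, ∃ hH : (complexHessian φ w).IsHermitian, hH.eigenvalues ∈ Lambda m M) →
      (∀ z ∈ ΩN, ∃ hH : (complexHessian (φ ∘ f) z).IsHermitian,
        hH.eigenvalues ∈ Lambda m N) := by
  classical
  intro φ hφ hherm z hz
  -- the linear part of `f` as a continuous linear map
  set L : (Fin N → ℂ) →L[ℝ] (Fin M → ℂ) :=
    LinearMap.toContinuousLinearMap (((c : ℂ) • A.mulVecLin).restrictScalars ℝ) with hLdef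
  have hLapply : ∀ u, L u = (c : ℂ) • A.mulVec u := fun u => rfl
  have hLsmul : ∀ (a : ℂ) (u : Fin N → ℂ), L (a • u) = a • L u := by
    intro a u
    rw [hLapply, hLapply, Matrix.mulVec_smul, smul_comm]
  have hfL : ∀ y, f y = L y + w₀ := by intro y; rw [hf]; rfl
  have hfd : ∀ y, HasFDerivAt f L y := by
    intro y
    have h : HasFDerivAt (fun y => L y + w₀) L y := (L.hasFDerivAt).add_const w₀
    exact (funext hfL : f = fun y => L y + w₀) ▸ h
  -- differentiability facts
  have hφdiff : ∀ w' ∈ ΩM, DifferentiableAt ℝ φ w' := fun w' hw' =>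
    (hφ.differentiableOn (by norm_num)).differentiableAt (hΩM.mem_nhds hw')
  have hg1 : ContDiffOn ℝ 1 (fderiv ℝ φ) ΩM := hφ.fderiv_of_isOpen hΩM (by norm_num)
  have hgdiff : ∀ w' ∈ ΩM, DifferentiableAt ℝ (fderiv ℝ φ) w' := fun w' hw' =>
    (hg1.differentiableOn one_ne_zero).differentiableAt (hΩM.mem_nhds hw')
  -- first derivative of the composition
  have claim1 : ∀ z' ∈ ΩN, fderiv ℝ (φ ∘ f) z' = (fderiv ℝ φ (f z')).comp L := by
    intro z' hz'
    exact (((hφdiff _ (hmaps hz')).hasFDerivAt).comp z' (hfd z')).fderiv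
  -- second derivative of the composition
  set Φ : ((Fin M → ℂ) →L[ℝ] ℝ) →L[ℝ] ((Fin N → ℂ) →L[ℝ] ℝ) :=
    (ContinuousLinearMap.compL ℝ (Fin N → ℂ) (Fin M → ℂ) ℝ).flip L with hΦdef
  have hΦapply : ∀ T : (Fin M → ℂ) →L[ℝ] ℝ, Φ T = T.comp L := by
    intro T
    rw [hΦdef, ContinuousLinearMap.flip_apply]
    rfl
  have claim2 : fderiv ℝ (fderiv ℝ (φ ∘ f)) z
      = Φ.comp ((fderiv ℝ (fderiv ℝ φ) (f z)).comp L) := by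
    have heq : fderiv ℝ (φ ∘ f) =ᶠ[nhds z] fun z' => Φ (fderiv ℝ φ (f z')) := by
      filter_upwards [hΩN.mem_nhds hz] with z' hz'
      rw [claim1 z' hz', hΦapply]
    rw [heq.fderiv_eq]
    have h1 : HasFDerivAt (fun z' => fderiv ℝ φ (f z'))
        ((fderiv ℝ (fderiv ℝ φ) (f z)).comp L) z :=
      ((hgdiff _ (hmaps hz)).hasFDerivAt).comp z (hfd z)
    exact (Φ.hasFDerivAt.comp z h1).fderiv
  set D : (Fin M → ℂ) →L[ℝ] ((Fin M → ℂ) →L[ℝ] ℝ) := fderiv ℝ (fderiv ℝ φ) (f z) with hDdef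
  have hD2 : ∀ u v, fderiv ℝ (fderiv ℝ (φ ∘ f)) z u v = D (L u) (L v) := by
    intro u v
    rw [claim2]
    simp only [ContinuousLinearMap.comp_apply, hΦapply]
  -- the complex Hessian of the composition via `hq`
  have hhq_comp : ∀ u v : Fin N → ℂ,
      hq (fderiv ℝ (fderiv ℝ (φ ∘ f)) z) u v = hq D (L u) (L v) := by
    intro u v
    simp only [hq, hD2, hLsmul]
  -- the matrix `B` of the adjoint transformation
  set Bm : Matrix (Fin N) (Fin M) ℂ := Matrix.of fun j p => (c : ℂ) * A p j with hBmdef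
  have hBm : ∀ j p, Bm j p = (c : ℂ) * A p j := fun j p => rfl
  have hLsingle : ∀ j : Fin N,
      L (Pi.single j 1) = ∑ p, ((c : ℂ) * A p j) • (Pi.single p 1 : Fin M → ℂ) := by
    intro j
    funext r
    rw [hLapply]
    simp [Matrix.mulVec, dotProduct, Pi.single_apply, Finset.sum_apply,
      mul_ite, Finset.sum_ite_eq, Finset.sum_ite_eq']
  set He := complexHessian φ (f z) with hHedef
  have hmat : complexHessian (φ ∘ f) z = Bm * He * Bmᴴ := by
    ext j k
    rw [complexHessian_eq_hq, hhq_comp, hLsingle, hLsingle, hq_sum_left]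
    have step : ∀ p : Fin M,
        hq D (((c : ℂ) * A p j) • (Pi.single p 1 : Fin M → ℂ))
          (∑ q, ((c : ℂ) * A q k) • (Pi.single q 1 : Fin M → ℂ))
        = ∑ q, ((c : ℂ) * A p j) * (starRingEnd ℂ) ((c : ℂ) * A q k) * He p q := by
      intro p
      rw [hq_smul_left, hq_sum_right, Finset.mul_sum]
      refine Finset.sum_congr rfl fun q _ => ?_
      rw [hq_smul_right, hHedef, complexHessian_eq_hq, hDdef]
      ring
    rw [Finset.sum_congr rfl fun p _ => step p]
    simp_rw [Matrix.mul_apply, Matrix.conjTranspose_apply, Finset.sum_mul]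
    rw [Finset.sum_comm]
    refine Finset.sum_congr rfl fun p _ => Finset.sum_congr rfl fun q _ => ?_
    rw [hBm, hBm]
    simp only [RCLike.star_def]
    ring
  -- the hypothesis at `f z`
  obtain ⟨hHe, hLam⟩ := hherm (f z) (hmaps hz)
  -- `Bmᴴ * Bm` is a nonnegative multiple of the identity
  have hM0 : 0 < M := lt_of_lt_of_le hm1 hmM
  set i₀ : Fin M := ⟨0, hM0⟩ with hi₀
  set t : ℝ := c ^ 2 * ∑ i, ‖A i₀ i‖ ^ 2 with htdef
  have ht : 0 ≤ t := by positivity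
  have hBB : Bmᴴ * Bm = (t : ℂ) • 1 := by
    ext p q
    rw [Matrix.mul_apply]
    simp only [Matrix.conjTranspose_apply, hBm]
    by_cases hpq : p = q
    · subst hpq
      have habs : ∀ j : Fin N, star ((c : ℂ) * A p j) * ((c : ℂ) * A p j)
          = ((c ^ 2 * ‖A p j‖ ^ 2 : ℝ) : ℂ) := by
        intro j
        rw [RCLike.star_def, _root_.map_mul, Complex.conj_ofReal,
          show (c : ℂ) * (starRingEnd ℂ) (A p j) * ((c : ℂ) * A p j)
            = ((c : ℂ) * (c : ℂ)) * (A p j * (starRingEnd ℂ) (A p j)) from by ring,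
          Complex.mul_conj, Complex.normSq_eq_norm_sq]
        push_cast
        ring
      rw [Finset.sum_congr rfl fun j _ => habs j]
      have hts : (t : ℂ) = ∑ j, ((c ^ 2 * ‖A p j‖ ^ 2 : ℝ) : ℂ) := by
        rw [htdef, hA.2 i₀ p]
        push_cast
        rw [Finset.mul_sum]
      rw [Matrix.smul_apply, Matrix.one_apply_eq, smul_eq_mul, mul_one, hts]
    · have hfold : ∑ j, star ((c : ℂ) * A p j) * ((c : ℂ) * A q j)
          = (c : ℂ) ^ 2 * (starRingEnd ℂ) (∑ j, A p j * (starRingEnd ℂ) (A q j)) := by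
        rw [_root_.map_sum, Finset.mul_sum]
        refine Finset.sum_congr rfl fun j _ => ?_
        rw [RCLike.star_def, _root_.map_mul, Complex.conj_ofReal, _root_.map_mul,
          Complex.conj_conj]
        ring
      rw [hfold, hA.1 p q hpq, map_zero, mul_zero, Matrix.smul_apply,
        Matrix.one_apply_ne hpq, smul_eq_mul, mul_zero]
  -- conclude
  have hGherm : (Bm * He * Bmᴴ).IsHermitian :=
    Matrix.isHermitian_mul_mul_conjTranspose Bm hHe
  obtain ⟨hGH, key⟩ : ∃ hGH : (complexHessian (φ ∘ f) z).IsHermitian,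
      Multiset.map hGH.eigenvalues Finset.univ.val
        = Multiset.replicate (N - M) 0
          + Multiset.map (fun j => t * hHe.eigenvalues j) Finset.univ.val := by
    rw [hmat]
    exact ⟨hGherm, eig_multiset_eq hMN t hHe hBB hGherm⟩
  refine ⟨hGH, ?_⟩
  intro l hl hlm
  rw [esymm, ← Finset.esymm_map_val, key, esymm_replicate_zero_add hl,
    show (fun j => t * hHe.eigenvalues j)
        = (fun a => t * a) ∘ hHe.eigenvalues from rfl,
    ← Multiset.map_map, esymm_map_mul]
  apply mul_nonneg (pow_nonneg ht l)
  rw [Finset.esymm_map_val]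
  exact hLam l hl hlm
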